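/- arXiv:2105.01310 — 2 statements merged into one kernel-verified Lean document; each statement's English description precedes it below -/
import Mathlib

section
/- For each fixed i ∈ {1,2,…,m−2}, define H_{i,i+1}(n) = A_i(n)²·A_{i+1}(n)² + (2/3)·A_i(n)·A_{i+1}(n)·(A_i(n)² + A_{i+1}(n)²). Then for every n ≥ 0, E[H_{i,i+1}(n+1) | F_n] = H_{i,i+1}(n) + (4/m)·A_i(n)·A_{i+1}(n) − 1/(3m). -/
open MeasureTheory ProbabilityTheory Filter
open scoped ENNReal

/-- The `m` possible step vectors of the competition process on the `m - 1` gaps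
(0-indexed): `step m 0 = -e₀`, `step m k = e_{k-1} - e_k` for `0 < k < m - 1`, and
`step m (m-1) = e_{m-2}`. -/
def step (m : ℕ) (k : Fin m) : Fin (m - 1) → ℤ := fun j =>
  (if (j : ℕ) + 1 = (k : ℕ) then 1 else 0) - (if (j : ℕ) = (k : ℕ) then 1 else 0)

lemma step_injective (m : ℕ) : Function.Injective (step m) := by
  intro k k' h
  by_contra hne
  have hne' : (k : ℕ) ≠ (k' : ℕ) := fun hh => hne (Fin.ext hh)
  wlog hlt : (k : ℕ) < (k' : ℕ) generalizing k k'
  · exact this h.symm (Ne.symm hne) (Ne.symm hne') (by omega)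
  have hk1 : (k : ℕ) < m - 1 := by have := k'.isLt; omega
  have := congrFun h ⟨(k : ℕ), hk1⟩
  simp only [step] at this
  split_ifs at this <;> omega

lemma abs_step_le (m : ℕ) (k : Fin m) (j : Fin (m - 1)) : |step m k j| ≤ 1 := by
  simp only [step]; split_ifs <;> simp

noncomputable def phiR (x y : ℝ) : ℝ := x ^ 2 * y ^ 2 + 2 / 3 * (x * y) * (x ^ 2 + y ^ 2)

lemma phiR_abs_bound (x y R : ℝ) (hx : |x| ≤ R) (hy : |y| ≤ R) :
    |phiR x y| ≤ 3 * R ^ 4 := by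
  obtain ⟨hx1, hx2⟩ := abs_le.mp hx
  obtain ⟨hy1, hy2⟩ := abs_le.mp hy
  have hR : 0 ≤ R := le_trans (abs_nonneg x) hx
  have h1 : x ^ 2 ≤ R ^ 2 := by nlinarith
  have h2 : y ^ 2 ≤ R ^ 2 := by nlinarith
  have h3 : x * y ≤ R ^ 2 := by nlinarith [sq_nonneg (x - y)]
  have h4 : -(R ^ 2) ≤ x * y := by nlinarith [sq_nonneg (x + y)]
  have h5 : x ^ 2 * y ^ 2 ≤ R ^ 2 * R ^ 2 :=
    mul_le_mul h1 h2 (sq_nonneg y) (sq_nonneg R)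
  have hs : (0:ℝ) ≤ x ^ 2 + y ^ 2 := by positivity
  have h6 : (x * y) * (x ^ 2 + y ^ 2) ≤ R ^ 2 * (x ^ 2 + y ^ 2) := by nlinarith
  have h8 : -(R ^ 2 * (x ^ 2 + y ^ 2)) ≤ (x * y) * (x ^ 2 + y ^ 2) := by nlinarith
  have h7 : R ^ 2 * (x ^ 2 + y ^ 2) ≤ R ^ 2 * (2 * R ^ 2) := by nlinarith [sq_nonneg R]
  have h9 : (0:ℝ) ≤ x ^ 2 * y ^ 2 := by positivity
  rw [phiR, abs_le]
  constructor <;> nlinarith [sq_nonneg R, sq_nonneg (R ^ 2)]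

lemma measurable_phiR {α : Type*} [MeasurableSpace α] {u v : α → ℝ}
    (hu : Measurable u) (hv : Measurable v) : Measurable fun ω => phiR (u ω) (v ω) := by
  simp only [phiR]
  fun_prop

lemma integrable_of_ae_bound {Ω : Type*} [MeasurableSpace Ω] {μ : Measure Ω}
    [IsFiniteMeasure μ] {f : Ω → ℝ} (C : ℝ)
    (hm : AEStronglyMeasurable f μ) (h : ∀ᵐ ω ∂μ, |f ω| ≤ C) :
    Integrable f μ :=
  Integrable.mono' (integrable_const C) hm
    (by filter_upwards [h] with ω hω; simpa [Real.norm_eq_abs] using hω)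

lemma measurable_add_pi {Ω : Type*} [MeasurableSpace Ω] {d : ℕ} {f g : Ω → (Fin d → ℤ)}
    (hf : Measurable f) (hg : Measurable g) : Measurable fun ω => f ω + g ω := by
  refine measurable_pi_iff.mpr fun jj => ?_
  simp only [Pi.add_apply]
  exact ((measurable_pi_apply jj).comp hf).add ((measurable_pi_apply jj).comp hg)

lemma measurable_phiR_shift {Ω : Type*} [MeasurableSpace Ω] {d : ℕ} {f : Ω → (Fin d → ℤ)}
    (hf : Measurable f) (i j : Fin d) (c c' : ℤ) :
    Measurable fun ω => phiR ((f ω i : ℝ) + (c : ℝ)) ((f ω j : ℝ) + (c' : ℝ)) := by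
  have h1 : Measurable fun ω => ((f ω i : ℝ)) :=
    measurable_from_top.comp ((measurable_pi_apply i).comp hf)
  have h2 : Measurable fun ω => ((f ω j : ℝ)) :=
    measurable_from_top.comp ((measurable_pi_apply j).comp hf)
  exact measurable_phiR (h1.add_const _) (h2.add_const _)

/-- For each adjacent pair `i, j = i + 1`, the process
`H n = A_i n ^ 2 * A_j n ^ 2 + (2/3) * A_i n * A_j n * (A_i n ^ 2 + A_j n ^ 2)` satisfies
`E[H (n+1) | ℱ n] = H n + (4/m) * A_i n * A_j n - 1 / (3m)`. -/
theorem stmt_16 (m : ℕ) (hm : 3 ≤ m)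
{Ω : Type*} [MeasurableSpace Ω] (μ : Measure Ω) [IsProbabilityMeasure μ]
    (a : Fin (m - 1) → ℕ) (ha : ∀ k, 0 < a k)
    (ξ : ℕ → Ω → (Fin (m - 1) → ℤ))
    (hmeas : ∀ n, Measurable (ξ n))
    (hindep : iIndepFun ξ μ)
    (hunif : ∀ n (k : Fin m), μ {ω | ξ n ω = step m k} = 1 / m)
    (A : ℕ → Ω → (Fin (m - 1) → ℤ))
    (hA0 : ∀ ω j, A 0 ω j = (a j : ℤ))
    (hA : ∀ n ω, A (n + 1) ω = A n ω + ξ n ω)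
(ℱ : ℕ → MeasurableSpace Ω)
    (hℱ : ∀ n, ℱ n = ⨆ k ∈ Finset.range n, MeasurableSpace.comap (ξ k) inferInstance)
    (i j : Fin (m - 1)) (hij : (j : ℕ) = (i : ℕ) + 1)
    (H : ℕ → Ω → ℝ)
    (hH : ∀ n ω, H n ω = (A n ω i : ℝ) ^ 2 * (A n ω j : ℝ) ^ 2
      + (2 / 3) * ((A n ω i : ℝ) * (A n ω j : ℝ)) * ((A n ω i : ℝ) ^ 2 + (A n ω j : ℝ) ^ 2)) :
    ∀ n : ℕ, μ[H (n + 1)|ℱ n]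
      =ᵐ[μ] fun ω => H n ω + (4 / (m : ℝ)) * ((A n ω i : ℝ) * (A n ω j : ℝ)) - 1 / (3 * m) := by
  -- basic numeric facts
  have hm0 : (m : ℝ) ≠ 0 := by positivity
  have hi2 : (i : ℕ) + 2 < m := by have := j.isLt; omega
  -- measurability of the level sets
  have hSmeas : ∀ n (k : Fin m), MeasurableSet {ω | ξ n ω = step m k} := by
    intro n k
    have : {ω | ξ n ω = step m k} = ξ n ⁻¹' {step m k} := by ext ω; simp
    rw [this]
    exact hmeas n (measurableSet_singleton _)
  -- ℱ n ≤ ambient σ-algebra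
  have hFle : ∀ n, ℱ n ≤ ‹MeasurableSpace Ω› := by
    intro n; rw [hℱ n]
    exact iSup₂_le fun k _ => (hmeas k).comap_le
  have hFsucc : ∀ n, ℱ n ≤ ℱ (n + 1) := by
    intro n; rw [hℱ n, hℱ (n + 1)]
    refine iSup₂_le fun k hk => ?_
    exact le_iSup₂ (f := fun (k : ℕ) (_ : k ∈ Finset.range (n + 1)) =>
      MeasurableSpace.comap (ξ k) inferInstance) k
      (Finset.mem_range.mpr (by have := Finset.mem_range.mp hk; omega))
  have hξF : ∀ n, MeasurableSpace.comap (ξ n) inferInstance ≤ ℱ (n + 1) := by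
    intro n; rw [hℱ (n + 1)]
    exact le_iSup₂ (f := fun (k : ℕ) (_ : k ∈ Finset.range (n + 1)) =>
      MeasurableSpace.comap (ξ k) inferInstance) n (Finset.mem_range.mpr (Nat.lt_succ_self n))
  -- A n is ℱ n - measurable
  have hAmeasF : ∀ n, Measurable[ℱ n] (A n) := by
    intro n; induction n with
    | zero =>
      have hA0' : A 0 = fun _ω => fun jj => (a jj : ℤ) :=
        funext fun ω => funext fun jj => hA0 ω jj
      rw [hA0']; exact measurable_const
    | succ p ih =>
      rw [show A (p + 1) = fun ω => A p ω + ξ p ω from funext (hA p)]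
      have h1 : Measurable[ℱ (p + 1)] (A p) := ih.mono (hFsucc p) le_rfl
      have h2 : Measurable[ℱ (p + 1)] (ξ p) := Measurable.of_comap_le (hξF p)
      exact @measurable_add_pi Ω (ℱ (p + 1)) _ _ _ h1 h2
  -- a.e., ξ n takes one of the m step values
  have hrange : ∀ n, ∀ᵐ ω ∂μ, ∃ l : Fin m, ξ n ω = step m l := by
    intro n
    set S : Fin m → Set Ω := fun k => {ω | ξ n ω = step m k} with hS
    have hdisj : Pairwise (Function.onFun Disjoint S) := by
      intro k k' hkk'
      simp only [Function.onFun, S, Set.disjoint_left, Set.mem_setOf_eq]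
      intro ω h1 h2
      exact hkk' (step_injective m (h1.symm.trans h2))
    have hU : μ (⋃ k, S k) = 1 := by
      rw [measure_iUnion hdisj fun k => hSmeas n k]
      rw [tsum_fintype]
      simp only [hS, hunif n]
      rw [Finset.sum_const, Finset.card_univ, Fintype.card_fin, nsmul_eq_mul, one_div,
        ENNReal.mul_inv_cancel (by exact_mod_cast (by omega : m ≠ 0)) (ENNReal.natCast_ne_top m)]
    have hcompl : μ (⋃ k, S k)ᶜ = 0 := by
      rw [measure_compl (MeasurableSet.iUnion fun k => hSmeas n k) (measure_ne_top μ _), hU]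
      simp
    rw [ae_iff]
    convert hcompl using 2
    ext ω
    simp [S, not_exists]
  -- a.e. bound on A n
  have hAbd : ∀ n, ∀ᵐ ω ∂μ, ∀ jj, |A n ω jj| ≤ (a jj : ℤ) + n := by
    intro n; induction n with
    | zero =>
      refine Filter.Eventually.of_forall fun ω jj => ?_
      rw [hA0 ω jj]
      simp [abs_of_nonneg]
    | succ p ih =>
      filter_upwards [ih, hrange p] with ω h1 h2 jj
      obtain ⟨l, hl⟩ := h2
      rw [hA p ω]
      have h3 := h1 jj
      have h4 := abs_step_le m l jj
      have : (A p ω + ξ p ω) jj = A p ω jj + step m l jj := by rw [Pi.add_apply, hl]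
      rw [this]
      calc |A p ω jj + step m l jj| ≤ |A p ω jj| + |step m l jj| := abs_add_le _ _
        _ ≤ ((a jj : ℤ) + p) + 1 := add_le_add h3 h4
        _ = (a jj : ℤ) + (p + 1 : ℕ) := by push_cast; ring
  -- independence of ξ n from ℱ n
  have hindepF : ∀ n, Indep (MeasurableSpace.comap (ξ n) inferInstance) (ℱ n) μ := by
    intro n
    have h := indep_biSup_compl (fun k => (hmeas k).comap_le) hindep.iIndep {k | k < n}
    have h1 : ℱ n = ⨆ k ∈ {k : ℕ | k < n}, MeasurableSpace.comap (ξ k) inferInstance := by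
      rw [hℱ n]
      apply le_antisymm
      · refine iSup₂_le fun k hk => ?_
        exact le_iSup₂ (f := fun (k : ℕ) (_ : k ∈ {k : ℕ | k < n}) =>
          MeasurableSpace.comap (ξ k) inferInstance) k (by simpa using hk)
      · refine iSup₂_le fun k hk => ?_
        exact le_iSup₂ (f := fun (k : ℕ) (_ : k ∈ Finset.range n) =>
          MeasurableSpace.comap (ξ k) inferInstance) k (by simpa using hk)
    have h2 : Indep (ℱ n) (MeasurableSpace.comap (ξ n) inferInstance) μ := by
      rw [h1]
      refine indep_of_indep_of_le_right h ?_
      exact le_iSup₂ (f := fun (k : ℕ) (_ : k ∈ {k : ℕ | k < n}ᶜ) =>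
        MeasurableSpace.comap (ξ k) MeasurableSpace.pi) n (by simp)
    exact h2.symm
  -- main computation
  intro n
  have hi0 : (i : ℕ) < m := by omega
  have hi1 : (i : ℕ) + 1 < m := by omega
  set k0 : Fin m := ⟨(i : ℕ), hi0⟩ with hk0
  set k1 : Fin m := ⟨(i : ℕ) + 1, hi1⟩ with hk1
  set k2 : Fin m := ⟨(i : ℕ) + 2, hi2⟩ with hk2
  set f : Fin m → Ω → ℝ := fun k ω =>
    phiR ((A n ω i : ℝ) + (step m k i : ℝ)) ((A n ω j : ℝ) + (step m k j : ℝ)) with hfdef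
  set I : Fin m → Ω → ℝ := fun k => ({ω | ξ n ω = step m k}).indicator fun _ => (1 : ℝ) with hIdef
  set R : ℝ := (a i : ℝ) + (a j : ℝ) + (n : ℝ) + 1 with hRdef
  -- step values at the special indices
  have hs0i : step m k0 i = -1 := by
    simp only [step, hk0, Fin.val_mk]; split_ifs <;> omega
  have hs0j : step m k0 j = 0 := by
    simp only [step, hk0, Fin.val_mk]; split_ifs <;> omega
  have hs1i : step m k1 i = 1 := by
    simp only [step, hk1, Fin.val_mk]; split_ifs <;> omega
  have hs1j : step m k1 j = -1 := by
    simp only [step, hk1, Fin.val_mk]; split_ifs <;> omega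
  have hs2i : step m k2 i = 0 := by
    simp only [step, hk2, Fin.val_mk]; split_ifs <;> omega
  have hs2j : step m k2 j = 1 := by
    simp only [step, hk2, Fin.val_mk]; split_ifs <;> omega
  -- measurability
  have hfglob : ∀ k, Measurable (f k) := fun k =>
    measurable_phiR_shift ((hAmeasF n).mono (hFle n) le_rfl) i j _ _
  have hfF : ∀ k, StronglyMeasurable[ℱ n] (f k) := fun k =>
    (@measurable_phiR_shift Ω (ℱ n) _ _ (hAmeasF n) i j _ _).stronglyMeasurable
  have hIglob : ∀ k, Measurable (I k) := fun k => measurable_const.indicator (hSmeas n k)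
  have hIbd : ∀ k ω, |I k ω| ≤ 1 := by
    intro k ω
    simp only [hIdef, Set.indicator]
    split_ifs <;> norm_num
  -- a.e. bound on f k
  have habs : ∀ k, ∀ᵐ ω ∂μ, |f k ω| ≤ 3 * R ^ 4 := by
    intro k
    filter_upwards [hAbd n] with ω hω
    have h1 := hω i
    have h2 := hω j
    have hcx : |(A n ω i : ℝ)| ≤ (a i : ℝ) + (n : ℝ) := by exact_mod_cast h1
    have hcy : |(A n ω j : ℝ)| ≤ (a j : ℝ) + (n : ℝ) := by exact_mod_cast h2
    have hsx : |(step m k i : ℝ)| ≤ 1 := by exact_mod_cast abs_step_le m k i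
    have hsy : |(step m k j : ℝ)| ≤ 1 := by exact_mod_cast abs_step_le m k j
    have hnn1 : (0 : ℝ) ≤ (a i : ℝ) := Nat.cast_nonneg _
    have hnn2 : (0 : ℝ) ≤ (a j : ℝ) := Nat.cast_nonneg _
    refine phiR_abs_bound _ _ _ ?_ ?_
    · calc |(A n ω i : ℝ) + (step m k i : ℝ)| ≤ |(A n ω i : ℝ)| + |(step m k i : ℝ)| :=
            abs_add_le _ _
        _ ≤ R := by rw [hRdef]; linarith
    · calc |(A n ω j : ℝ) + (step m k j : ℝ)| ≤ |(A n ω j : ℝ)| + |(step m k j : ℝ)| :=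
            abs_add_le _ _
        _ ≤ R := by rw [hRdef]; linarith
  -- integrability
  have hFint : ∀ k, Integrable (f k * I k) μ := by
    intro k
    refine integrable_of_ae_bound (3 * R ^ 4)
      (((hfglob k).mul (hIglob k)).aestronglyMeasurable) ?_
    filter_upwards [habs k] with ω h
    have h3 : (0 : ℝ) ≤ 3 * R ^ 4 := le_trans (abs_nonneg _) h
    rw [Pi.mul_apply, abs_mul]
    calc |f k ω| * |I k ω| ≤ (3 * R ^ 4) * 1 := mul_le_mul h (hIbd k ω) (abs_nonneg _) h3
      _ = 3 * R ^ 4 := mul_one _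
  have hIint : ∀ k, Integrable (I k) μ := fun k =>
    integrable_of_ae_bound 1 (hIglob k).aestronglyMeasurable
      (Filter.Eventually.of_forall (hIbd k))
  -- Step A: a.e. decomposition of H (n+1)
  have hHsum : H (n + 1) =ᵐ[μ] ∑ k : Fin m, f k * I k := by
    filter_upwards [hrange n] with ω hω
    obtain ⟨l, hl⟩ := hω
    have hsum : (∑ k : Fin m, f k * I k) ω = (f l * I l) ω := by
      rw [Finset.sum_apply]
      refine Finset.sum_eq_single l ?_ ?_
      · intro k _ hkl
        have hIk : I k ω = 0 := by
          simp only [hIdef]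
          apply Set.indicator_of_notMem
          intro hmem
          have : ξ n ω = step m k := hmem
          exact hkl (step_injective m (this.symm.trans hl))
        rw [Pi.mul_apply, hIk, mul_zero]
      · intro h; exact absurd (Finset.mem_univ l) h
    rw [hsum]
    have hIl : I l ω = 1 := by
      simp only [hIdef]
      exact Set.indicator_of_mem (show ω ∈ {ω | ξ n ω = step m l} from hl) _
    have hAi' : A (n + 1) ω i = A n ω i + step m l i := by rw [hA n ω, Pi.add_apply, hl]
    have hAj' : A (n + 1) ω j = A n ω j + step m l j := by rw [hA n ω, Pi.add_apply, hl]
    rw [Pi.mul_apply, hIl, mul_one, hH (n + 1) ω, hfdef]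
    simp only [hAi', hAj', phiR]
    push_cast
    ring
  -- conditional expectation of the indicators
  have hIcond : ∀ k, μ[I k|ℱ n] =ᵐ[μ] fun _ => (1 / (m : ℝ)) := by
    intro k
    have hsm : StronglyMeasurable[MeasurableSpace.comap (ξ n) inferInstance] (I k) := by
      refine stronglyMeasurable_const.indicator ?_
      exact ⟨{step m k}, measurableSet_singleton _, by ext ω; simp⟩
    have hInt : ∫ x, I k x ∂μ = 1 / (m : ℝ) := by
      simp only [hIdef]
      rw [integral_indicator_const (1 : ℝ) (hSmeas n k), measureReal_def, hunif n k]
      simp [ENNReal.toReal_div]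
    have h := condExp_indep_eq ((hmeas n).comap_le) (hFle n) hsm (hindepF n)
    exact h.trans (Filter.Eventually.of_forall fun ω => hInt)
  -- pull-out property
  have hmul : ∀ k, μ[f k * I k|ℱ n] =ᵐ[μ] fun ω => f k ω * (1 / (m : ℝ)) := by
    intro k
    refine (condExp_mul_of_stronglyMeasurable_left (hfF k) (hFint k) (hIint k)).trans ?_
    filter_upwards [hIcond k] with ω hω
    rw [Pi.mul_apply, hω]
  have hall : ∀ᵐ ω ∂μ, ∀ k, (μ[f k * I k|ℱ n]) ω = f k ω * (1 / (m : ℝ)) :=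
    ae_all_iff.mpr hmul
  -- the key pointwise algebraic identity
  have key : ∀ ω, ∑ k : Fin m, f k ω * (1 / (m : ℝ))
      = H n ω + (4 / (m : ℝ)) * ((A n ω i : ℝ) * (A n ω j : ℝ)) - 1 / (3 * m) := by
    intro ω
    have hsplit := Finset.sum_sdiff (f := fun k => f k ω * (1 / (m : ℝ)))
      (Finset.subset_univ ({k0, k1, k2} : Finset (Fin m)))
    rw [← hsplit]
    have hrest : ∀ k ∈ Finset.univ \ ({k0, k1, k2} : Finset (Fin m)),
        f k ω * (1 / (m : ℝ)) = phiR (A n ω i : ℝ) (A n ω j : ℝ) * (1 / (m : ℝ)) := by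
      intro k hk
      simp only [Finset.mem_sdiff, Finset.mem_insert, Finset.mem_singleton, hk0, hk1, hk2] at hk
      obtain ⟨-, hk⟩ := hk
      push_neg at hk
      obtain ⟨h0, h1, h2⟩ := hk
      have hv0 : (k : ℕ) ≠ (i : ℕ) := fun h => h0 (Fin.ext h)
      have hv1 : (k : ℕ) ≠ (i : ℕ) + 1 := fun h => h1 (Fin.ext h)
      have hv2 : (k : ℕ) ≠ (i : ℕ) + 2 := fun h => h2 (Fin.ext h)
      have hsi : step m k i = 0 := by
        simp only [step]; rw [if_neg (by omega), if_neg (by omega)]; norm_num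
      have hsj : step m k j = 0 := by
        simp only [step]; rw [if_neg (by omega), if_neg (by omega)]; norm_num
      simp only [hfdef, hsi, hsj]
      norm_num
    rw [Finset.sum_congr rfl hrest, Finset.sum_const]
    have hne01 : k0 ≠ k1 := by
      simp only [hk0, hk1, ne_eq, Fin.mk.injEq]; omega
    have hne02 : k0 ≠ k2 := by
      simp only [hk0, hk2, ne_eq, Fin.mk.injEq]; omega
    have hne12 : k1 ≠ k2 := by
      simp only [hk1, hk2, ne_eq, Fin.mk.injEq]; omega
    have hcard : (Finset.univ \ ({k0, k1, k2} : Finset (Fin m))).card = m - 3 := by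
      rw [Finset.card_sdiff_of_subset (Finset.subset_univ _), Finset.card_univ, Fintype.card_fin]
      rw [Finset.card_insert_of_notMem (by simp [hne01, hne02]),
        Finset.card_insert_of_notMem (by simp [hne12]), Finset.card_singleton]
    have hsum3 : ∑ k ∈ ({k0, k1, k2} : Finset (Fin m)), f k ω * (1 / (m : ℝ))
        = (f k0 ω + f k1 ω + f k2 ω) * (1 / (m : ℝ)) := by
      rw [Finset.sum_insert (by simp [hne01, hne02]),
        Finset.sum_insert (by simp [hne12]), Finset.sum_singleton]
      ring
    rw [hcard, hsum3]
    simp only [hfdef, hs0i, hs0j, hs1i, hs1j, hs2i, hs2j, hH n ω]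
    rw [nsmul_eq_mul, Nat.cast_sub hm]
    push_cast
    simp only [phiR]
    field_simp
    ring
  -- assemble everything
  calc μ[H (n + 1)|ℱ n] =ᵐ[μ] μ[∑ k : Fin m, f k * I k|ℱ n] := condExp_congr_ae hHsum
    _ =ᵐ[μ] ∑ k : Fin m, μ[f k * I k|ℱ n] := condExp_finset_sum (fun k _ => hFint k) (ℱ n)
    _ =ᵐ[μ] fun ω => H n ω + (4 / (m : ℝ)) * ((A n ω i : ℝ) * (A n ω j : ℝ)) - 1 / (3 * m) := by
        filter_upwards [hall] with ω hω
        rw [Finset.sum_apply, Finset.sum_congr rfl fun k _ => hω k]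
        exact key ω
end

section
/- For each fixed i ∈ {1,2,…,m−2}, with H_{i,i+1}(n) = A_i(n)²·A_{i+1}(n)² + (2/3)·A_i(n)·A_{i+1}(n)·(A_i(n)² + A_{i+1}(n)²), the process M_{i,i+1}(n) = H_{i,i+1}(n) − (4n/m)·A_i(n)·A_{i+1}(n) − (2/m²)·n² + (1/(3m) − 2/m²)·n is a martingale with respect to the filtration (F_n), i.e. E[M_{i,i+1}(n+1) | F_n] = M_{i,i+1}(n) for every n ≥ 0. -/
open MeasureTheory ProbabilityTheory Filter
open scoped ENNReal

noncomputable def Mval (m n : ℕ) (u v : ℝ) : ℝ :=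
  u ^ 2 * v ^ 2 + 2 / 3 * (u * v) * (u ^ 2 + v ^ 2) - 4 * (n : ℝ) / (m : ℝ) * (u * v)
    - 2 / (m : ℝ) ^ 2 * (n : ℝ) ^ 2 + (1 / (3 * (m : ℝ)) - 2 / (m : ℝ) ^ 2) * (n : ℝ)

noncomputable def psifun (m n : ℕ) (i j : Fin (m - 1)) (k : Fin m)
    (x : Fin (m - 1) → ℤ) : ℝ :=
  Mval m (n + 1) ((x i + step m k i : ℤ) : ℝ) ((x j + step m k j : ℤ) : ℝ)

lemma step_inj {m : ℕ} (hm : 2 ≤ m) : Function.Injective (step m) := by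
  intro k k' h
  by_contra hne
  have hne' : (k : ℕ) ≠ (k' : ℕ) := fun hh => hne (Fin.ext hh)
  have key : ∀ k k' : Fin m, step m k = step m k' → (k : ℕ) ≠ (k' : ℕ) → ¬ (k : ℕ) < m - 1 := by
    intro k k' h hkk hlt
    have h2 := congrFun h ⟨(k : ℕ), hlt⟩
    simp only [step] at h2
    split_ifs at h2 <;> omega
  have h1 := key k k' h hne'
  have h2 := key k' k h.symm (Ne.symm hne')
  have := k.2
  have := k'.2
  omega

lemma step_abs_le {m : ℕ} (k : Fin m) (l : Fin (m - 1)) : |step m k l| ≤ 1 := by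
  simp only [step]
  split_ifs <;> norm_num

lemma key_sum (m n : ℕ) (hm : 3 ≤ m) (i j : Fin (m - 1)) (hij : (j : ℕ) = (i : ℕ) + 1)
    (x : Fin (m - 1) → ℤ) :
    ∑ k : Fin m, Mval m (n + 1) ((x i + step m k i : ℤ) : ℝ) ((x j + step m k j : ℤ) : ℝ)
      = m * Mval m n ((x i : ℤ) : ℝ) ((x j : ℤ) : ℝ) := by
  have hjlt := j.2
  have hi2 : (i : ℕ) + 2 < m := by omega
  set u : ℝ := ((x i : ℤ) : ℝ) with hu
  set v : ℝ := ((x j : ℤ) : ℝ) with hv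
  have hstep : ∀ k : Fin m,
      Mval m (n + 1) ((x i + step m k i : ℤ) : ℝ) ((x j + step m k j : ℤ) : ℝ)
        = Mval m (n + 1)
            (u + ((if (i : ℕ) + 1 = (k : ℕ) then (1 : ℝ) else 0) - (if (i : ℕ) = (k : ℕ) then 1 else 0)))
            (v + ((if (i : ℕ) + 2 = (k : ℕ) then (1 : ℝ) else 0) - (if (i : ℕ) + 1 = (k : ℕ) then 1 else 0))) := by
    intro k
    simp only [step, hij]
    push_cast
    rw [hu, hv]
  rw [Finset.sum_congr rfl (fun k _ => hstep k)]
  rw [Fin.sum_univ_eq_sum_range (fun r => Mval m (n + 1)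
      (u + ((if (i : ℕ) + 1 = r then (1 : ℝ) else 0) - (if (i : ℕ) = r then 1 else 0)))
      (v + ((if (i : ℕ) + 2 = r then (1 : ℝ) else 0) - (if (i : ℕ) + 1 = r then 1 else 0)))) m]
  have hsplit : ∀ r ∈ Finset.range m,
      Mval m (n + 1)
        (u + ((if (i : ℕ) + 1 = r then (1 : ℝ) else 0) - (if (i : ℕ) = r then 1 else 0)))
        (v + ((if (i : ℕ) + 2 = r then (1 : ℝ) else 0) - (if (i : ℕ) + 1 = r then 1 else 0)))
      = Mval m (n + 1) u v
        + (if r = (i : ℕ) then Mval m (n + 1) (u - 1) v - Mval m (n + 1) u v else 0)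
        + (if r = (i : ℕ) + 1 then Mval m (n + 1) (u + 1) (v - 1) - Mval m (n + 1) u v else 0)
        + (if r = (i : ℕ) + 2 then Mval m (n + 1) u (v + 1) - Mval m (n + 1) u v else 0) := by
    intro r _
    split_ifs <;> first
      | (exfalso; omega)
      | (simp only [Mval]; push_cast; ring)
  rw [Finset.sum_congr rfl hsplit]
  rw [Finset.sum_add_distrib, Finset.sum_add_distrib, Finset.sum_add_distrib,
    Finset.sum_const, Finset.card_range, Finset.sum_ite_eq', Finset.sum_ite_eq',
    Finset.sum_ite_eq']
  rw [if_pos (Finset.mem_range.mpr (by omega)), if_pos (Finset.mem_range.mpr (by omega)),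
    if_pos (Finset.mem_range.mpr (by omega))]
  have hm0 : (m : ℝ) ≠ 0 := by positivity
  simp only [Mval, nsmul_eq_mul]
  push_cast
  field_simp
  ring

/-- For each adjacent pair `i, j = i + 1`, with `H` as in Statement 16,
the process `M n = H n - (4n/m) * A_i n * A_j n - (2/m²) * n² + (1/(3m) - 2/m²) * n` is a
martingale with respect to the filtration generated by the steps. -/
theorem stmt_17 (m : ℕ) (hm : 3 ≤ m)
{Ω : Type*} [MeasurableSpace Ω] (μ : Measure Ω) [IsProbabilityMeasure μ]
    (a : Fin (m - 1) → ℕ) (ha : ∀ k, 0 < a k)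
    (ξ : ℕ → Ω → (Fin (m - 1) → ℤ))
    (hmeas : ∀ n, Measurable (ξ n))
    (hindep : iIndepFun ξ μ)
    (hunif : ∀ n (k : Fin m), μ {ω | ξ n ω = step m k} = 1 / m)
    (A : ℕ → Ω → (Fin (m - 1) → ℤ))
    (hA0 : ∀ ω j, A 0 ω j = (a j : ℤ))
    (hA : ∀ n ω, A (n + 1) ω = A n ω + ξ n ω)
(ℱ : ℕ → MeasurableSpace Ω)
    (hℱ : ∀ n, ℱ n = ⨆ k ∈ Finset.range n, MeasurableSpace.comap (ξ k) inferInstance)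
    (i j : Fin (m - 1)) (hij : (j : ℕ) = (i : ℕ) + 1)
    (H : ℕ → Ω → ℝ)
    (hH : ∀ n ω, H n ω = (A n ω i : ℝ) ^ 2 * (A n ω j : ℝ) ^ 2
      + (2 / 3) * ((A n ω i : ℝ) * (A n ω j : ℝ)) * ((A n ω i : ℝ) ^ 2 + (A n ω j : ℝ) ^ 2))
    (M : ℕ → Ω → ℝ)
    (hM : ∀ n ω, M n ω = H n ω - (4 * (n : ℝ) / m) * ((A n ω i : ℝ) * (A n ω j : ℝ))
      - (2 / (m : ℝ) ^ 2) * (n : ℝ) ^ 2 + (1 / (3 * (m : ℝ)) - 2 / (m : ℝ) ^ 2) * n) :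
    ∀ n : ℕ, μ[M (n + 1)|ℱ n] =ᵐ[μ] M n := by
  intro n
  have hm0 : (m : ℝ) ≠ 0 := by
    have : (0 : ℝ) < m := by exact_mod_cast lt_of_lt_of_le (by norm_num : 0 < 3) hm
    exact ne_of_gt this
  -- M in terms of Mval
  have hM' : ∀ N ω, M N ω = Mval m N ((A N ω i : ℤ) : ℝ) ((A N ω j : ℤ) : ℝ) := by
    intro N ω
    rw [hM, hH, Mval]
  -- σ-algebra inequalities
  have hle : ∀ k : ℕ, MeasurableSpace.comap (ξ k) inferInstance ≤ ‹MeasurableSpace Ω› :=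
    fun k => (hmeas k).comap_le
  have hℱle : ∀ N, ℱ N ≤ ‹MeasurableSpace Ω› := by
    intro N; rw [hℱ]
    exact iSup₂_le fun k _ => hle k
  have hmono : ∀ {N N' : ℕ}, N ≤ N' → ℱ N ≤ ℱ N' := by
    intro N N' h
    rw [hℱ, hℱ]
    exact biSup_mono fun k hk => Finset.mem_range.mpr
      (lt_of_lt_of_le (Finset.mem_range.mp hk) h)
  -- A N is ℱ N-measurable
  have hAmeas : ∀ N, Measurable[ℱ N] (A N) := by
    intro N
    induction N with
    | zero =>
      have : A 0 = fun _ => fun l => (a l : ℤ) := funext fun ω => funext fun l => hA0 ω l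
      rw [this]; exact measurable_const
    | succ N ih =>
      have h1 : Measurable[ℱ (N + 1)] (A N) := ih.mono (hmono (Nat.le_succ N)) le_rfl
      have h2 : Measurable[ℱ (N + 1)] (ξ N) := by
        refine Measurable.of_comap_le ?_
        rw [hℱ]
        exact le_iSup₂ (f := fun (k : ℕ) (_ : k ∈ Finset.range (N + 1)) =>
          MeasurableSpace.comap (ξ k) inferInstance) N (Finset.mem_range.mpr N.lt_succ_self)
      have h12 : Measurable[ℱ (N + 1)] fun ω => (A N ω, ξ N ω) := h1.prodMk h2
      have heq : A (N + 1) = (fun p : (Fin (m - 1) → ℤ) × (Fin (m - 1) → ℤ) => p.1 + p.2)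
          ∘ fun ω => (A N ω, ξ N ω) := funext fun ω => hA N ω
      rw [heq]
      exact fun s hs => h12 ((measurable_of_countable
        (fun p : (Fin (m - 1) → ℤ) × (Fin (m - 1) → ℤ) => p.1 + p.2)) hs)
  have hAmeas' : Measurable (A n) := (hAmeas n).mono (hℱle n) le_rfl
  -- independence of comap (ξ n) and ℱ n
  have hIndep : Indep (MeasurableSpace.comap (ξ n) inferInstance) (ℱ n) μ := by
    have h := indep_iSup_of_disjoint
      (m := fun k : ℕ => MeasurableSpace.comap (ξ k) inferInstance)
      (fun k => hle k) hindep.iIndep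
      (S := {n}) (T := {k : ℕ | k < n})
      (by simp only [Set.disjoint_left, Set.mem_singleton_iff, Set.mem_setOf_eq]
          rintro x rfl; omega)
    have e1 : (⨆ k ∈ ({n} : Set ℕ), MeasurableSpace.comap (ξ k) inferInstance)
        = MeasurableSpace.comap (ξ n) inferInstance := by simp
    have e2 : (⨆ k ∈ {k : ℕ | k < n}, MeasurableSpace.comap (ξ k) inferInstance) = ℱ n := by
      rw [hℱ]
      simp only [Finset.mem_range, Set.mem_setOf_eq]
    rwa [e1, e2] at h
  haveI hσ : SigmaFinite (μ.trim (hℱle n)) := by infer_instance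
  -- the events
  have hSmeas : ∀ k : Fin m, MeasurableSet {ω | ξ n ω = step m k} :=
    fun k => hmeas n (measurableSet_singleton (step m k))
  have hSmeas' : ∀ k : Fin m, MeasurableSet[MeasurableSpace.comap (ξ n) inferInstance]
      {ω | ξ n ω = step m k} :=
    fun k => ⟨{step m k}, measurableSet_singleton _, rfl⟩
  -- a.e. each ξ r lands in the range of step
  have hr : ∀ r : ℕ, ∀ᵐ ω ∂μ, ∃ k : Fin m, ξ r ω = step m k := by
    intro r
    have hdisj : Pairwise (Function.onFun Disjoint fun k : Fin m => {ω | ξ r ω = step m k}) := by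
      intro k k' hkk
      simp only [Function.onFun, Set.disjoint_left, Set.mem_setOf_eq]
      intro ω h1 h2
      exact hkk (step_inj (by omega) (h1 ▸ h2 ▸ rfl))
    have hmeask : ∀ k : Fin m, MeasurableSet {ω | ξ r ω = step m k} :=
      fun k => hmeas r (measurableSet_singleton (step m k))
    have hU : μ (⋃ k : Fin m, {ω | ξ r ω = step m k}) = 1 := by
      rw [measure_iUnion hdisj hmeask]
      simp only [hunif r]
      rw [tsum_fintype]
      simp only [Finset.sum_const, Finset.card_univ, Fintype.card_fin, nsmul_eq_mul, one_div]
      rw [ENNReal.mul_inv_cancel (by exact_mod_cast (by omega : m ≠ 0))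
        (ENNReal.natCast_ne_top m)]
    have hcompl : μ ((⋃ k : Fin m, {ω | ξ r ω = step m k})ᶜ) = 0 := by
      rw [measure_compl (MeasurableSet.iUnion hmeask) (measure_ne_top μ _), hU,
        measure_univ, tsub_self]
    refine (ae_iff.mpr ?_)
    convert hcompl using 2
    ext ω
    simp [Set.mem_iUnion]
  -- a.e. bound on A N
  have hAbd : ∀ N, ∀ᵐ ω ∂μ, ∀ l, |A N ω l| ≤ (a l : ℤ) + N := by
    intro N
    induction N with
    | zero =>
      filter_upwards with ω l
      rw [hA0]
      simp
    | succ N ih =>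
      filter_upwards [ih, hr N] with ω hω hk l
      obtain ⟨k, hk⟩ := hk
      rw [hA N ω]
      calc |(A N ω + ξ N ω) l| = |A N ω l + ξ N ω l| := by rw [Pi.add_apply]
        _ ≤ |A N ω l| + |ξ N ω l| := abs_add_le _ _
        _ ≤ ((a l : ℤ) + N) + 1 := by
            have h1 : |ξ N ω l| ≤ 1 := by rw [hk]; exact step_abs_le k l
            exact add_le_add (hω l) h1
        _ = (a l : ℤ) + (N + 1 : ℕ) := by push_cast; ring
  -- the summand functions
  have hFeq : ∀ k : Fin m,
      (fun ω => psifun m n i j k (A n ω) * ({ω | ξ n ω = step m k}).indicator (1 : Ω → ℝ) ω)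
        = (fun ω => psifun m n i j k (A n ω))
            * ({ω | ξ n ω = step m k}).indicator (1 : Ω → ℝ) := fun k => rfl
  -- measurability facts
  have hψF : ∀ k : Fin m, StronglyMeasurable[ℱ n] (fun ω => psifun m n i j k (A n ω)) := by
    intro k
    have : Measurable[ℱ n] (fun ω => psifun m n i j k (A n ω)) :=
      fun s hs => (hAmeas n) ((measurable_of_countable (psifun m n i j k)) hs)
    exact this.stronglyMeasurable
  have hFmeas : ∀ k : Fin m, AEStronglyMeasurable
      (fun ω => psifun m n i j k (A n ω) * ({ω | ξ n ω = step m k}).indicator (1 : Ω → ℝ) ω)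
      μ := by
    intro k
    refine (Measurable.mul ?_ ?_).aestronglyMeasurable
    · exact (measurable_of_countable (psifun m n i j k)).comp hAmeas'
    · exact measurable_const.indicator (hSmeas k)
  -- uniform bound and integrability
  have hFint : ∀ k : Fin m, Integrable
      (fun ω => psifun m n i j k (A n ω) * ({ω | ξ n ω = step m k}).indicator (1 : Ω → ℝ) ω)
      μ := by
    intro k
    have hTfin : (Set.pi Set.univ fun l => Set.Icc (-(a l : ℤ) - n) ((a l : ℤ) + n)).Finite :=
      Set.Finite.pi fun l => Set.finite_Icc _ _
    obtain ⟨C, hC⟩ := (hTfin.image fun x => |psifun m n i j k x|).bddAbove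
    refine Integrable.mono' (integrable_const (max C 0)) (hFmeas k) ?_
    filter_upwards [hAbd n] with ω hω
    have hmem : A n ω ∈ Set.pi Set.univ fun l => Set.Icc (-(a l : ℤ) - n) ((a l : ℤ) + n) := by
      rw [Set.mem_univ_pi]
      intro l
      have := hω l
      rw [abs_le] at this
      exact Set.mem_Icc.mpr ⟨by omega, this.2⟩
    have h1 : |psifun m n i j k (A n ω)| ≤ C := hC (Set.mem_image_of_mem _ hmem)
    have h2 : ‖({ω | ξ n ω = step m k}).indicator (1 : Ω → ℝ) ω‖ ≤ 1 := by
      by_cases h : ω ∈ {ω | ξ n ω = step m k}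
      · rw [Set.indicator_of_mem h]; simp
      · rw [Set.indicator_of_notMem h]; simp
    calc ‖psifun m n i j k (A n ω) * ({ω | ξ n ω = step m k}).indicator (1 : Ω → ℝ) ω‖
        = ‖psifun m n i j k (A n ω)‖ * ‖({ω | ξ n ω = step m k}).indicator (1 : Ω → ℝ) ω‖ :=
          norm_mul _ _
      _ ≤ max C 0 * 1 :=
          mul_le_mul (le_trans h1 (le_max_left _ _)) h2 (norm_nonneg _) (le_max_right _ _)
      _ = max C 0 := mul_one _
  have hIndint : ∀ k : Fin m,
      Integrable (({ω | ξ n ω = step m k}).indicator (1 : Ω → ℝ)) μ :=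
    fun k => (integrable_const (1 : ℝ)).indicator (hSmeas k)
  -- the conditional expectation of the indicator is 1/m
  have hcond_ind : ∀ k : Fin m,
      μ[({ω | ξ n ω = step m k}).indicator (1 : Ω → ℝ)|ℱ n] =ᵐ[μ] fun _ => ((m : ℝ))⁻¹ := by
    intro k
    have hsm : StronglyMeasurable[MeasurableSpace.comap (ξ n) inferInstance]
        (({ω | ξ n ω = step m k}).indicator (1 : Ω → ℝ)) :=
      stronglyMeasurable_const.indicator (hSmeas' k)
    have h := condExp_indep_eq (hle n) (hℱle n) hsm hIndep
    refine h.trans ?_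
    have : ∫ ω, ({ω | ξ n ω = step m k}).indicator (1 : Ω → ℝ) ω ∂μ = ((m : ℝ))⁻¹ := by
      rw [integral_indicator_one (hSmeas k), measureReal_def, hunif n k]
      simp [ENNReal.toReal_inv]
    rw [this]
  -- conditional expectation of each summand
  have hcondF : ∀ k : Fin m,
      μ[fun ω => psifun m n i j k (A n ω) * ({ω | ξ n ω = step m k}).indicator (1 : Ω → ℝ) ω|ℱ n]
        =ᵐ[μ] fun ω => psifun m n i j k (A n ω) * ((m : ℝ))⁻¹ := by
    intro k
    have hint : Integrable ((fun ω => psifun m n i j k (A n ω))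
        * ({ω | ξ n ω = step m k}).indicator (1 : Ω → ℝ)) μ := (hFeq k) ▸ hFint k
    have h1 := condExp_mul_of_stronglyMeasurable_left (hψF k) hint (hIndint k)
    rw [← hFeq k] at h1
    filter_upwards [h1, hcond_ind k] with ω e1 e2
    rw [e1, Pi.mul_apply, e2]
  -- decomposition of M (n+1)
  have hdecomp : M (n + 1) =ᵐ[μ] ∑ k : Fin m,
      fun ω => psifun m n i j k (A n ω) * ({ω | ξ n ω = step m k}).indicator (1 : Ω → ℝ) ω := by
    filter_upwards [hr n] with ω hω
    obtain ⟨k₀, hk₀⟩ := hω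
    have hsum : (∑ k : Fin m, fun ω => psifun m n i j k (A n ω)
        * ({ω | ξ n ω = step m k}).indicator (1 : Ω → ℝ) ω) ω
        = psifun m n i j k₀ (A n ω) * ({ω | ξ n ω = step m k₀}).indicator (1 : Ω → ℝ) ω := by
      rw [Finset.sum_apply]
      refine Finset.sum_eq_single k₀ (fun k _ hk => ?_) (fun h => absurd (Finset.mem_univ k₀) h)
      have hnot : ω ∉ {ω | ξ n ω = step m k} := by
        intro hmem
        exact hk (step_inj (by omega) ((hk₀ ▸ hmem : step m k₀ = step m k)).symm)
      rw [Set.indicator_of_notMem hnot, mul_zero]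
    have hmem : ω ∈ {ω | ξ n ω = step m k₀} := hk₀
    rw [hsum, Set.indicator_of_mem hmem, Pi.one_apply, mul_one]
    rw [hM' (n + 1) ω, hA n ω, psifun]
    simp only [Pi.add_apply, hk₀]
  -- conclusion
  have hfinal : (∑ k : Fin m,
      μ[fun ω => psifun m n i j k (A n ω) * ({ω | ξ n ω = step m k}).indicator (1 : Ω → ℝ) ω|ℱ n])
      =ᵐ[μ] M n := by
    have hall : ∀ᵐ ω ∂μ, ∀ k : Fin m,
        (μ[fun ω => psifun m n i j k (A n ω)
          * ({ω | ξ n ω = step m k}).indicator (1 : Ω → ℝ) ω|ℱ n]) ω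
          = psifun m n i j k (A n ω) * ((m : ℝ))⁻¹ :=
      ae_all_iff.mpr fun k => hcondF k
    filter_upwards [hall] with ω hω
    rw [Finset.sum_apply]
    calc ∑ k : Fin m, (μ[fun ω => psifun m n i j k (A n ω)
          * ({ω | ξ n ω = step m k}).indicator (1 : Ω → ℝ) ω|ℱ n]) ω
        = ∑ k : Fin m, psifun m n i j k (A n ω) * ((m : ℝ))⁻¹ :=
          Finset.sum_congr rfl fun k _ => hω k
      _ = (∑ k : Fin m, psifun m n i j k (A n ω)) * ((m : ℝ))⁻¹ := (Finset.sum_mul _ _ _).symm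
      _ = (m * Mval m n ((A n ω i : ℤ) : ℝ) ((A n ω j : ℤ) : ℝ)) * ((m : ℝ))⁻¹ := by
          rw [show (∑ k : Fin m, psifun m n i j k (A n ω))
            = ∑ k : Fin m, Mval m (n + 1) ((A n ω i + step m k i : ℤ) : ℝ)
              ((A n ω j + step m k j : ℤ) : ℝ) from rfl]
          rw [key_sum m n hm i j hij (A n ω)]
      _ = M n ω := by
          rw [hM' n ω, mul_comm, inv_mul_cancel_left₀ hm0]
  exact ((condExp_congr_ae hdecomp).trans (condExp_finset_sum (fun k _ => hFint k) (ℱ n))).trans hfinal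
end
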